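/- arXiv:1502.05383 — 4 statements merged into one kernel-verified Lean document; each statement's English description precedes it below -/
import Mathlib

section
/- Let A be a finite-dimensional semisimple real *-algebra with the canonical Frobenius form φ₀(a) = Σᵢ nᵢ (dim Dᵢ) Re tr(aᵢ) coming from the decomposition A ≅ ⊕ᵢ M(nᵢ, Dᵢ). Then φ₀ is a Frobenius form (the bilinear form (a,b) ↦ φ₀(ab) is non-degenerate) that is special, *-invariant, and symmetric. -/
open Matrix

/-- The three real division algebras ℝ, ℂ, ℍ. -/
inductive DivType | R | C | H

/-- The underlying type of a real division algebra. -/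
def DivAlg : DivType → Type
  | .R => ℝ
  | .C => ℂ
  | .H => Quaternion ℝ

noncomputable instance instDivAlgRing : (t : DivType) → Ring (DivAlg t)
  | .R => inferInstanceAs (Ring ℝ)
  | .C => inferInstanceAs (Ring ℂ)
  | .H => inferInstanceAs (Ring (Quaternion ℝ))

noncomputable instance instDivAlgStarRing : (t : DivType) → StarRing (DivAlg t)
  | .R => inferInstanceAs (StarRing ℝ)
  | .C => inferInstanceAs (StarRing ℂ)
  | .H => inferInstanceAs (StarRing (Quaternion ℝ))

noncomputable instance instDivAlgAlgebra : (t : DivType) → Algebra ℝ (DivAlg t)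
  | .R => inferInstanceAs (Algebra ℝ ℝ)
  | .C => inferInstanceAs (Algebra ℝ ℂ)
  | .H => inferInstanceAs (Algebra ℝ (Quaternion ℝ))

/-- The real part on each division algebra. -/
def DivRe : {t : DivType} → DivAlg t → ℝ
  | .R => id
  | .C => Complex.re
  | .H => QuaternionAlgebra.re

/-- The real dimension of each division algebra. -/
def dimD : DivType → ℕ | .R => 1 | .C => 2 | .H => 4

/-- A finite-dimensional semisimple real *-algebra, presented via
Artin–Wedderburn as ⊕ᵢ M(nᵢ, Dᵢ). -/
def SSAlg {ι : Type} (n : ι → ℕ) (d : ι → DivType) : Type :=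
  (i : ι) → Matrix (Fin (n i)) (Fin (n i)) (DivAlg (d i))

noncomputable instance {ι : Type} (n : ι → ℕ) (d : ι → DivType) : Ring (SSAlg n d) :=
  inferInstanceAs (Ring ((i : ι) → Matrix (Fin (n i)) (Fin (n i)) (DivAlg (d i))))

noncomputable instance {ι : Type} (n : ι → ℕ) (d : ι → DivType) : StarRing (SSAlg n d) :=
  inferInstanceAs (StarRing ((i : ι) → Matrix (Fin (n i)) (Fin (n i)) (DivAlg (d i))))

noncomputable instance {ι : Type} (n : ι → ℕ) (d : ι → DivType) : Module ℝ (SSAlg n d) :=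
  inferInstanceAs (Module ℝ ((i : ι) → Matrix (Fin (n i)) (Fin (n i)) (DivAlg (d i))))

/-- The canonical Frobenius form φ₀(a) = Σᵢ nᵢ (dim Dᵢ) Re tr(aᵢ). -/
noncomputable def phi0 {ι : Type} [Fintype ι] (n : ι → ℕ) (d : ι → DivType)
    (a : SSAlg n d) : ℝ :=
  ∑ i, (n i : ℝ) * (dimD (d i) : ℝ) * DivRe ((a i).trace)

-- aux helpers on concrete types
lemma quatReMulComm (x y : Quaternion ℝ) : (x * y).re = (y * x).re := by
  simp only [Quaternion.re_mul]; ring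

lemma realMulStar (x : ℝ) : x * star x = 0 → x = 0 := by
  intro h; simpa using mul_self_eq_zero.mp h

lemma cplxMulStar (x : ℂ) : (x * star x).re = 0 → x = 0 := by
  intro h
  rw [show (star x : ℂ) = (starRingEnd ℂ) x from rfl, Complex.mul_conj] at h
  have : Complex.normSq x = 0 := by exact_mod_cast h
  exact Complex.normSq_eq_zero.mp this

lemma quatMulStar (x : Quaternion ℝ) : (x * star x).re = 0 → x = 0 := by
  intro h
  rw [Quaternion.self_mul_star] at h
  simp only [Quaternion.re_coe] at h
  exact Quaternion.normSq_eq_zero.mp h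

lemma divRe_add : ∀ {t : DivType} (x y : DivAlg t), DivRe (x + y) = DivRe x + DivRe y
  | .R, _, _ => rfl
  | .C, _, _ => rfl
  | .H, _, _ => rfl

lemma divRe_zero : ∀ {t : DivType}, DivRe (0 : DivAlg t) = 0
  | .R => rfl
  | .C => rfl
  | .H => rfl

lemma divRe_sum {t : DivType} {β : Type*} (s : Finset β) (f : β → DivAlg t) :
    DivRe (∑ b ∈ s, f b) = ∑ b ∈ s, DivRe (f b) := by
  classical
  induction s using Finset.induction with
  | empty => simp [divRe_zero]
  | insert _ _ h ih => simp [Finset.sum_insert h, divRe_add, ih]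

lemma divRe_star : ∀ {t : DivType} (x : DivAlg t), DivRe (star x) = DivRe x
  | .R, _ => rfl
  | .C, _ => rfl
  | .H, x => Quaternion.re_star (R := ℝ) x

lemma divRe_mul_comm : ∀ {t : DivType} (x y : DivAlg t), DivRe (x * y) = DivRe (y * x)
  | .R, x, y => congrArg id (mul_comm (show ℝ from x) (show ℝ from y))
  | .C, x, y => congrArg Complex.re (mul_comm (show ℂ from x) (show ℂ from y))
  | .H, x, y => quatReMulComm (show Quaternion ℝ from x) (show Quaternion ℝ from y)

lemma divRe_mul_star_self : ∀ {t : DivType} (x : DivAlg t), DivRe (x * star x) = 0 → x = 0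
  | .R, x => realMulStar (show ℝ from x)
  | .C, x => cplxMulStar (show ℂ from x)
  | .H, x => quatMulStar (show Quaternion ℝ from x)

def qI : Quaternion ℝ := ⟨0,1,0,0⟩
def qJ : Quaternion ℝ := ⟨0,0,1,0⟩
def qK : Quaternion ℝ := ⟨0,0,0,1⟩
@[simp] lemma qI_re : qI.re = 0 := rfl
@[simp] lemma qI_imI : qI.imI = 1 := rfl
@[simp] lemma qI_imJ : qI.imJ = 0 := rfl
@[simp] lemma qI_imK : qI.imK = 0 := rfl
@[simp] lemma qJ_re : qJ.re = 0 := rfl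
@[simp] lemma qJ_imI : qJ.imI = 0 := rfl
@[simp] lemma qJ_imJ : qJ.imJ = 1 := rfl
@[simp] lemma qJ_imK : qJ.imK = 0 := rfl
@[simp] lemma qK_re : qK.re = 0 := rfl
@[simp] lemma qK_imI : qK.imI = 0 := rfl
@[simp] lemma qK_imJ : qK.imJ = 0 := rfl
@[simp] lemma qK_imK : qK.imK = 1 := rfl
@[simp] lemma q1_re : (1 : Quaternion ℝ).re = 1 := rfl
@[simp] lemma q1_imI : (1 : Quaternion ℝ).imI = 0 := rfl
@[simp] lemma q1_imJ : (1 : Quaternion ℝ).imJ = 0 := rfl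
@[simp] lemma q1_imK : (1 : Quaternion ℝ).imK = 0 := rfl

/-- A real basis of each division algebra. -/
noncomputable def divBasis : (t : DivType) → Fin (dimD t) → DivAlg t
  | .R => fun _ => (1 : ℝ)
  | .C => ![1, Complex.I]
  | .H => ![1, qI, qJ, qK]

lemma cplxExpandA (x : ℂ) :
    ∑ s : Fin 2, (x * star (![1, Complex.I] s)).re • ![1, Complex.I] s = x := by
  apply Complex.ext <;>
    simp [Fin.sum_univ_two, Complex.real_smul, Complex.mul_re, Complex.mul_im]

lemma cplxExpandB (x : ℂ) :
    ∑ s : Fin 2, (x * ![1, Complex.I] s).re • star (![1, Complex.I] s) = x := by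
  apply Complex.ext <;>
    simp [Fin.sum_univ_two, Complex.real_smul, Complex.mul_re, Complex.mul_im]

lemma quatExpandA (x : Quaternion ℝ) :
    ∑ s : Fin 4, (x * star ((![1, qI, qJ, qK] : Fin 4 → Quaternion ℝ) s)).re
      • (![1, qI, qJ, qK] : Fin 4 → Quaternion ℝ) s = x := by
  ext <;>
    simp [Fin.sum_univ_four, Quaternion.re_mul, Quaternion.ext_iff, smul_eq_mul]

lemma quatExpandB (x : Quaternion ℝ) :
    ∑ s : Fin 4, (x * (![1, qI, qJ, qK] : Fin 4 → Quaternion ℝ) s).re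
      • star ((![1, qI, qJ, qK] : Fin 4 → Quaternion ℝ) s) = x := by
  ext <;>
    simp [Fin.sum_univ_four, Quaternion.re_mul, Quaternion.ext_iff, smul_eq_mul]

lemma divExpandA : ∀ {t : DivType} (x : DivAlg t),
    ∑ s, DivRe (x * star (divBasis t s)) • divBasis t s = x
  | .R, x => by
      show ∑ _s : Fin 1, ((show ℝ from x) * star (1:ℝ)) • (1:ℝ) = (show ℝ from x)
      simp
      exact mul_one (show ℝ from x)
  | .C, x => cplxExpandA (show ℂ from x)
  | .H, x => quatExpandA (show Quaternion ℝ from x)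

lemma divExpandB : ∀ {t : DivType} (x : DivAlg t),
    ∑ s, DivRe (x * divBasis t s) • star (divBasis t s) = x
  | .R, x => by
      show ∑ _s : Fin 1, ((show ℝ from x) * (1:ℝ)) • star (1:ℝ) = (show ℝ from x)
      simp
      exact mul_one (show ℝ from x)
  | .C, x => cplxExpandB (show ℂ from x)
  | .H, x => quatExpandB (show Quaternion ℝ from x)

lemma divBasisStarMulSum : ∀ (t : DivType),
    ∑ s, star (divBasis t s) * divBasis t s = ((dimD t : ℝ) • 1 : DivAlg t)
  | .R => by
      show ∑ _s : Fin 1, star (1:ℝ) * (1:ℝ) = ((1:ℕ) : ℝ) • (1:ℝ)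
      simp
  | .C => by
      show ∑ s : Fin 2, star (![1, Complex.I] s) * ![1, Complex.I] s = ((2:ℕ) : ℝ) • (1:ℂ)
      simp [Fin.sum_univ_two, Complex.ext_iff, Complex.real_smul]
      norm_num
  | .H => by
      show ∑ s : Fin 4, star ((![1, qI, qJ, qK] : Fin 4 → Quaternion ℝ) s)
        * (![1, qI, qJ, qK] : Fin 4 → Quaternion ℝ) s
        = ((4:ℕ) : ℝ) • (1 : Quaternion ℝ)
      ext <;> simp [Fin.sum_univ_four, Quaternion.ext_iff, smul_eq_mul] <;> norm_num

-- trace helpers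
lemma trace_mul_stdBasis {R : Type*} [NonUnitalNonAssocSemiring R] {m : Type*} [Fintype m]
    [DecidableEq m] (M : Matrix m m R) (q p : m) (x : R) :
    (M * Matrix.single q p x).trace = M p q * x := by
  classical
  simp only [Matrix.trace, Matrix.diag, Matrix.mul_apply, Matrix.single,
    Matrix.of_apply]
  rw [Finset.sum_comm]
  simp [ite_and, Finset.sum_ite_eq, mul_ite]

lemma stdBasis_mul_trace {R : Type*} [NonUnitalNonAssocSemiring R] {m : Type*} [Fintype m]
    [DecidableEq m] (M : Matrix m m R) (q p : m) (x : R) :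
    (Matrix.single q p x * M).trace = x * M p q := by
  classical
  simp only [Matrix.trace, Matrix.diag, Matrix.mul_apply, Matrix.single,
    Matrix.of_apply]
  simp [ite_and, Finset.sum_ite_eq, ite_mul]

section main
variable {ι : Type} [Fintype ι] (n : ι → ℕ) (d : ι → DivType)

lemma ssalg_mul_apply (a b : SSAlg n d) (i : ι) : (a * b) i = a i * b i := rfl

/-- Pi.single as an SSAlg element. -/
noncomputable def ssSingle [DecidableEq ι] (i : ι)
    (M : Matrix (Fin (n i)) (Fin (n i)) (DivAlg (d i))) : SSAlg n d :=
  Pi.single i M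

lemma ssSingle_apply_same [DecidableEq ι] (i : ι)
    (M : Matrix (Fin (n i)) (Fin (n i)) (DivAlg (d i))) : ssSingle n d i M i = M :=
  Pi.single_eq_same (M := fun k => Matrix (Fin (n k)) (Fin (n k)) (DivAlg (d k))) i M

lemma smul_ssSingle [DecidableEq ι] (r : ℝ) (i : ι)
    (M : Matrix (Fin (n i)) (Fin (n i)) (DivAlg (d i))) :
    r • ssSingle n d i M = ssSingle n d i (r • M) := by
  funext j
  show r • Pi.single (M := fun k => Matrix (Fin (n k)) (Fin (n k)) (DivAlg (d k))) i M j
    = Pi.single (M := fun k => Matrix (Fin (n k)) (Fin (n k)) (DivAlg (d k))) i (r • M) j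
  rcases eq_or_ne j i with rfl | hj
  · rw [Pi.single_eq_same, Pi.single_eq_same]
  · rw [Pi.single_eq_of_ne hj, Pi.single_eq_of_ne hj, smul_zero]

lemma phi0_single [DecidableEq ι] (i : ι) (M : Matrix (Fin (n i)) (Fin (n i)) (DivAlg (d i))) :
    phi0 n d (ssSingle n d i M) = (n i : ℝ) * (dimD (d i) : ℝ) * DivRe M.trace := by
  unfold ssSingle
  unfold phi0
  rw [Finset.sum_eq_single i]
  · simp
  · intro j _ hj
    rw [Pi.single_eq_of_ne hj]
    simp [Matrix.trace_zero, divRe_zero]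
  · simp

lemma mul_single (a : SSAlg n d) [DecidableEq ι] (i : ι)
    (M : Matrix (Fin (n i)) (Fin (n i)) (DivAlg (d i))) :
    a * ssSingle n d i M = ssSingle n d i (a i * M) := by
  funext j
  show a j * Pi.single (M := fun k => Matrix (Fin (n k)) (Fin (n k)) (DivAlg (d k))) i M j
    = Pi.single (M := fun k => Matrix (Fin (n k)) (Fin (n k)) (DivAlg (d k))) i (a i * M) j
  rcases eq_or_ne j i with rfl | hj
  · simp
  · rw [Pi.single_eq_of_ne hj, Pi.single_eq_of_ne hj, mul_zero]

lemma single_mul (a : SSAlg n d) [DecidableEq ι] (i : ι)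
    (M : Matrix (Fin (n i)) (Fin (n i)) (DivAlg (d i))) :
    ssSingle n d i M * a = ssSingle n d i (M * a i) := by
  funext j
  show Pi.single (M := fun k => Matrix (Fin (n k)) (Fin (n k)) (DivAlg (d k))) i M j * a j
    = Pi.single (M := fun k => Matrix (Fin (n k)) (Fin (n k)) (DivAlg (d k))) i (M * a i) j
  rcases eq_or_ne j i with rfl | hj
  · simp
  · rw [Pi.single_eq_of_ne hj, Pi.single_eq_of_ne hj, zero_mul]

end main

section matlemmas
variable {t : DivType} {m : Type*} [Fintype m] [DecidableEq m]

lemma divRe_smul : ∀ {t : DivType} (r : ℝ) (x : DivAlg t), DivRe (r • x) = r * DivRe x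
  | .R, r, x => rfl
  | .C, r, x => by
      show ((r • (show ℂ from x)).re) = r * (show ℂ from x).re
      exact Complex.smul_re r x
  | .H, r, x => by
      show ((r • (show Quaternion ℝ from x)).re) = r * (show Quaternion ℝ from x).re
      exact QuaternionAlgebra.re_smul r (show Quaternion ℝ from x)

lemma matExpandA (M : Matrix m m (DivAlg t)) :
    ∑ p : m, ∑ q : m, ∑ s, DivRe (M p q * star (divBasis t s)) • Matrix.single p q (divBasis t s)
      = M := by
  ext p₀ q₀
  simp only [Matrix.sum_apply, Matrix.smul_apply]
  rw [Finset.sum_eq_single p₀ (fun p _ hp => Finset.sum_eq_zero fun q _ =>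
    Finset.sum_eq_zero fun s _ => by
      rw [Matrix.single_apply_of_ne _ _ _ _ _ (fun h => hp h.1), smul_zero]) (by simp)]
  rw [Finset.sum_eq_single q₀ (fun q _ hq => Finset.sum_eq_zero fun s _ => by
      rw [Matrix.single_apply_of_ne _ _ _ _ _ (fun h => hq h.2), smul_zero]) (by simp)]
  simp only [Matrix.single_apply_same]
  exact divExpandA (M p₀ q₀)

lemma matExpandB (M : Matrix m m (DivAlg t)) :
    ∑ p : m, ∑ q : m, ∑ s, DivRe (divBasis t s * M q p) • Matrix.single q p (star (divBasis t s))
      = M := by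
  ext q₀ p₀
  simp only [Matrix.sum_apply, Matrix.smul_apply]
  rw [Finset.sum_eq_single p₀ (fun p _ hp => Finset.sum_eq_zero fun q _ =>
    Finset.sum_eq_zero fun s _ => by
      rw [Matrix.single_apply_of_ne _ _ _ _ _ (fun h => hp h.2), smul_zero]) (by simp)]
  rw [Finset.sum_eq_single q₀ (fun q _ hq => Finset.sum_eq_zero fun s _ => by
      rw [Matrix.single_apply_of_ne _ _ _ _ _ (fun h => hq h.1), smul_zero]) (by simp)]
  simp only [Matrix.single_apply_same]
  rw [show ∀ z : DivAlg t, (∑ s, DivRe (divBasis t s * z) • star (divBasis t s))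
      = ∑ s, DivRe (z * divBasis t s) • star (divBasis t s) from fun z => by
    exact Finset.sum_congr rfl fun s _ => by rw [divRe_mul_comm]]
  exact divExpandB (M q₀ p₀)

lemma matSpecial (r : ℝ) :
    ∑ p : m, ∑ q : m, ∑ s,
        Matrix.single q p (r • star (divBasis t s)) * Matrix.single p q (divBasis t s)
      = ((r * (Fintype.card m : ℝ) * (dimD t : ℝ)) • (1 : Matrix m m (DivAlg t))) := by
  have key : ∀ q : m, ∑ s, r • (star (divBasis t s) * divBasis t s)
      = (r * (dimD t : ℝ)) • (1 : DivAlg t) := fun q => by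
    rw [← Finset.smul_sum, divBasisStarMulSum, smul_smul]
  simp only [Matrix.single_mul_single_same, smul_mul_assoc]
  ext a b
  simp only [Matrix.sum_apply]
  rw [Finset.sum_comm]
  rcases eq_or_ne a b with rfl | hab
  · rw [Finset.sum_eq_single a (fun q _ hq => Finset.sum_eq_zero fun p _ =>
      Finset.sum_eq_zero fun s _ =>
        Matrix.single_apply_of_ne _ _ _ _ _ (fun h => hq h.1)) (by simp)]
    simp only [Matrix.single_apply_same, Finset.sum_const, Finset.card_univ,
      Matrix.smul_apply, Matrix.one_apply_eq]
    rw [key a, ← Nat.cast_smul_eq_nsmul ℝ, smul_smul,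
      show (Fintype.card m : ℝ) * (r * (dimD t : ℝ)) = r * (Fintype.card m : ℝ) * (dimD t : ℝ)
        from by ring]
  · rw [Finset.sum_eq_zero (fun q _ => Finset.sum_eq_zero fun p _ =>
      Finset.sum_eq_zero fun s _ => ?_)]
    · simp [Matrix.smul_apply, Matrix.one_apply_ne hab]
    · rcases eq_or_ne q a with rfl | hq
      · exact Matrix.single_apply_of_ne _ _ _ _ _ (fun h => hab (h.2.symm ▸ rfl))
      · exact Matrix.single_apply_of_ne _ _ _ _ _ (fun h => hq h.1)

lemma divReTraceMulComm (A B : Matrix m m (DivAlg t)) :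
    DivRe ((A * B).trace) = DivRe ((B * A).trace) := by
  simp only [Matrix.trace, Matrix.diag, Matrix.mul_apply, divRe_sum]
  rw [Finset.sum_comm]
  exact Finset.sum_congr rfl fun j _ => Finset.sum_congr rfl fun k _ => divRe_mul_comm _ _

lemma divReTraceStar (A : Matrix m m (DivAlg t)) :
    DivRe ((star A).trace) = DivRe (A.trace) := by
  simp only [Matrix.trace, Matrix.diag, divRe_sum]
  exact Finset.sum_congr rfl fun k _ => by
    rw [show (star A) k k = star (A k k) from rfl, divRe_star]

end matlemmas

section assemble
variable {ι : Type} [Fintype ι] [DecidableEq ι] (n : ι → ℕ) (d : ι → DivType)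

/-- index type for the dual basis -/
abbrev JIdx (n : ι → ℕ) (d : ι → DivType) : Type :=
  (i : ι) × (Fin (n i) × Fin (n i) × Fin (dimD (d i)))

lemma sum_single_sigma
    (g : (j : JIdx n d) → Matrix (Fin (n j.1)) (Fin (n j.1)) (DivAlg (d j.1))) (i₀ : ι) :
    (∑ j : JIdx n d, ssSingle n d j.1 (g j)) i₀
      = ∑ y : Fin (n i₀) × Fin (n i₀) × Fin (dimD (d i₀)), g ⟨i₀, y⟩ := by
  refine (Finset.sum_apply (M := fun i => Matrix (Fin (n i)) (Fin (n i)) (DivAlg (d i))) i₀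
    Finset.univ (fun j : JIdx n d => ssSingle n d j.1 (g j))).trans ?_
  rw [← Finset.univ_sigma_univ, Finset.sum_sigma]
  refine Eq.trans (Finset.sum_eq_single i₀ (fun i _ hi => Finset.sum_eq_zero fun y _ =>
    Pi.single_eq_of_ne hi.symm _) (by simp)) ?_
  exact Finset.sum_congr rfl fun y _ => Pi.single_eq_same _ _

end assemble

section keys
variable {ι : Type} [Fintype ι] [DecidableEq ι] (n : ι → ℕ) (d : ι → DivType)

/-- The weight of each Wedderburn block. -/
def cF (i : ι) : ℝ := (n i : ℝ) * (dimD (d i) : ℝ)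

lemma cF_ne_zero (hn : ∀ i, 0 < n i) (i : ι) : cF n d i ≠ 0 := by
  have h1 : (0:ℝ) < n i := by exact_mod_cast hn i
  have h2 : (0:ℝ) < dimD (d i) := by cases d i <;> norm_num [dimD]
  unfold cF; positivity

noncomputable def BLaux (j : JIdx n d) : SSAlg n d :=
  ssSingle n d j.1
    (Matrix.single j.2.2.1 j.2.1 ((cF n d j.1)⁻¹ • star (divBasis (d j.1) j.2.2.2)))

noncomputable def BRaux (j : JIdx n d) : SSAlg n d :=
  ssSingle n d j.1 (Matrix.single j.2.1 j.2.2.1 (divBasis (d j.1) j.2.2.2))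

lemma phi0_mul_BLaux (hn : ∀ i, 0 < n i) (a : SSAlg n d) (j : JIdx n d) :
    phi0 n d (a * BLaux n d j)
      = DivRe (a j.1 j.2.1 j.2.2.1 * star (divBasis (d j.1) j.2.2.2)) := by
  obtain ⟨i, p, q, s⟩ := j
  rw [show BLaux n d ⟨i, (p, q, s)⟩
      = ssSingle n d i (Matrix.single q p ((cF n d i)⁻¹ • star (divBasis (d i) s))) from rfl,
    mul_single, phi0_single, trace_mul_stdBasis, mul_smul_comm, divRe_smul, ← mul_assoc,
    show ((n i : ℝ) * (dimD (d i) : ℝ)) = cF n d i from rfl,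
    mul_inv_cancel₀ (cF_ne_zero n d hn i), one_mul]

lemma phi0_BRaux_mul (a : SSAlg n d) (j : JIdx n d) :
    phi0 n d (BRaux n d j * a)
      = cF n d j.1 * DivRe (divBasis (d j.1) j.2.2.2 * a j.1 j.2.2.1 j.2.1) := by
  obtain ⟨i, p, q, s⟩ := j
  rw [show BRaux n d ⟨i, (p, q, s)⟩
      = ssSingle n d i (Matrix.single p q (divBasis (d i) s)) from rfl,
    single_mul, phi0_single, stdBasis_mul_trace]
  rfl

lemma key1 (hn : ∀ i, 0 < n i) (a : SSAlg n d) :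
    ∑ j : JIdx n d, phi0 n d (a * BLaux n d j) • BRaux n d j = a := by
  funext i₀
  rw [Finset.sum_congr rfl fun (j : JIdx n d) _ => show
      phi0 n d (a * BLaux n d j) • BRaux n d j
        = ssSingle n d j.1 (DivRe (a j.1 j.2.1 j.2.2.1 * star (divBasis (d j.1) j.2.2.2))
            • Matrix.single j.2.1 j.2.2.1 (divBasis (d j.1) j.2.2.2)) from by
    rw [phi0_mul_BLaux n d hn a j,
      show BRaux n d j = ssSingle n d j.1 (Matrix.single j.2.1 j.2.2.1 (divBasis (d j.1) j.2.2.2))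
        from rfl, smul_ssSingle]]
  rw [sum_single_sigma n d _ i₀]
  simp_rw [Fintype.sum_prod_type]
  exact matExpandA (a i₀)

lemma key2 (hn : ∀ i, 0 < n i) (a : SSAlg n d) :
    ∑ j : JIdx n d, phi0 n d (BRaux n d j * a) • BLaux n d j = a := by
  funext i₀
  rw [Finset.sum_congr rfl fun (j : JIdx n d) _ => show
      phi0 n d (BRaux n d j * a) • BLaux n d j
        = ssSingle n d j.1 (DivRe (divBasis (d j.1) j.2.2.2 * a j.1 j.2.2.1 j.2.1)
            • Matrix.single j.2.2.1 j.2.1 (star (divBasis (d j.1) j.2.2.2))) from by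
    rw [phi0_BRaux_mul n d a j,
      show BLaux n d j = ssSingle n d j.1 (Matrix.single j.2.2.1 j.2.1
        ((cF n d j.1)⁻¹ • star (divBasis (d j.1) j.2.2.2))) from rfl, smul_ssSingle,
      Matrix.smul_single, smul_smul,
      show cF n d j.1 * DivRe (divBasis (d j.1) j.2.2.2 * a j.1 j.2.2.1 j.2.1) * (cF n d j.1)⁻¹
        = DivRe (divBasis (d j.1) j.2.2.2 * a j.1 j.2.2.1 j.2.1) from by
        field_simp [cF_ne_zero n d hn j.1], ← Matrix.smul_single]]
  rw [sum_single_sigma n d _ i₀]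
  simp_rw [Fintype.sum_prod_type]
  exact matExpandB (a i₀)

lemma key3 (hn : ∀ i, 0 < n i) :
    ∑ j : JIdx n d, BLaux n d j * BRaux n d j = 1 := by
  funext i₀
  rw [Finset.sum_congr rfl fun (j : JIdx n d) _ => show
      BLaux n d j * BRaux n d j
        = ssSingle n d j.1 (Matrix.single j.2.2.1 j.2.1
              ((cF n d j.1)⁻¹ • star (divBasis (d j.1) j.2.2.2))
            * Matrix.single j.2.1 j.2.2.1 (divBasis (d j.1) j.2.2.2)) from by
    rw [show BLaux n d j = ssSingle n d j.1 (Matrix.single j.2.2.1 j.2.1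
        ((cF n d j.1)⁻¹ • star (divBasis (d j.1) j.2.2.2))) from rfl, single_mul,
      show BRaux n d j j.1 = Matrix.single j.2.1 j.2.2.1 (divBasis (d j.1) j.2.2.2) from
        ssSingle_apply_same n d j.1 _]]
  rw [sum_single_sigma n d _ i₀]
  simp_rw [Fintype.sum_prod_type]
  have := matSpecial (t := d i₀) (m := Fin (n i₀)) ((cF n d i₀)⁻¹)
  rw [this, Fintype.card_fin,
    show (cF n d i₀)⁻¹ * (n i₀ : ℝ) * (dimD (d i₀) : ℝ) = 1 from by
      rw [mul_assoc, show (n i₀ : ℝ) * (dimD (d i₀) : ℝ) = cF n d i₀ from rfl,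
        inv_mul_cancel₀ (cF_ne_zero n d hn i₀)], one_smul]
  rfl

end keys

/-- The canonical form φ₀ on a finite-dimensional semisimple real
*-algebra ⊕ᵢ M(nᵢ,Dᵢ) is a Frobenius form (its associated bilinear form is
non-degenerate) which is special, *-invariant, and symmetric. -/
theorem canonical_frobenius_form
    {ι : Type} [Fintype ι] (n : ι → ℕ) (d : ι → DivType) (hn : ∀ i, 0 < n i) :
    -- non-degeneracy on both sides
    (∀ a : SSAlg n d, (∀ b, phi0 n d (a * b) = 0) → a = 0)
    ∧ (∀ b : SSAlg n d, (∀ a, phi0 n d (a * b) = 0) → b = 0)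
    -- *-invariance
    ∧ (∀ a : SSAlg n d, phi0 n d (star a) = phi0 n d a)
    -- symmetry
    ∧ (∀ a b : SSAlg n d, phi0 n d (a * b) = phi0 n d (b * a))
    -- speciality: the inverse bilinear element B = Σ B_L ⊗ B_R satisfies Σ B_L B_R = 1
    ∧ (∃ (k : ℕ) (BL BR : Fin k → SSAlg n d),
        (∀ a, ∑ j, phi0 n d (a * BL j) • BR j = a)
        ∧ (∀ a, ∑ j, phi0 n d (BR j * a) • BL j = a)
        ∧ ∑ j, BL j * BR j = 1) := by
  classical
  have hsymm : ∀ a b : SSAlg n d, phi0 n d (a * b) = phi0 n d (b * a) := by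
    intro a b
    unfold phi0
    exact Finset.sum_congr rfl fun i _ => by
      rw [ssalg_mul_apply, ssalg_mul_apply, divReTraceMulComm]
  have hleft : ∀ a : SSAlg n d, (∀ b, phi0 n d (a * b) = 0) → a = 0 := by
    intro a ha
    funext i
    show a i = 0
    ext p q
    rw [Matrix.zero_apply]
    have h := ha (ssSingle n d i (Matrix.single q p (star (a i p q))))
    rw [mul_single, phi0_single, trace_mul_stdBasis] at h
    have hc : ((n i : ℝ) * (dimD (d i) : ℝ)) ≠ 0 := cF_ne_zero n d hn i
    exact divRe_mul_star_self _ ((mul_eq_zero.mp h).resolve_left hc)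
  refine ⟨hleft, ?_, ?_, hsymm, ?_⟩
  · intro b hb
    exact hleft b fun a => (hsymm b a).trans (hb a)
  · intro a
    unfold phi0
    exact Finset.sum_congr rfl fun i _ => by
      rw [show (star a) i = star (a i) from rfl, divReTraceStar]
  · refine ⟨Fintype.card (JIdx n d), fun x => BLaux n d ((Fintype.equivFin (JIdx n d)).symm x),
      fun x => BRaux n d ((Fintype.equivFin (JIdx n d)).symm x), ?_, ?_, ?_⟩
    · intro a
      exact (Equiv.sum_comp (Fintype.equivFin (JIdx n d)).symm
        (fun j => phi0 n d (a * BLaux n d j) • BRaux n d j)).trans (key1 n d hn a)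
    · intro a
      exact (Equiv.sum_comp (Fintype.equivFin (JIdx n d)).symm
        (fun j => phi0 n d (BRaux n d j * a) • BLaux n d j)).trans (key2 n d hn a)
    · exact (Equiv.sum_comp (Fintype.equivFin (JIdx n d)).symm
        (fun j => BLaux n d j * BRaux n d j)).trans (key3 n d hn)
end

section
/- Every Dirac operator D of a finite real spectral triple can be written as D = θ + ε′JθJ⁻¹, where θ is a self-adjoint operator on H commuting with the right action Jρ(a)J⁻¹ of A for all a, and satisfying θΓ + Γθ = 0 when s is even (θΓ = Γθ when s is odd). Conversely any such θ defines a Dirac operator. -/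
open Matrix

set_option linter.unusedSectionVars false

namespace DiracDecomp

variable {n : Type*} [Fintype n] [DecidableEq n]

noncomputable def cmap (X : Matrix n n ℂ) : Matrix n n ℂ := X.map (starRingEnd ℂ)

lemma cmap_mul (X Y : Matrix n n ℂ) : cmap (X * Y) = cmap X * cmap Y := by
  simp [cmap, Matrix.map_mul]
lemma cmap_add (X Y : Matrix n n ℂ) : cmap (X + Y) = cmap X + cmap Y := by ext i j; simp [cmap]
lemma cmap_sub (X Y : Matrix n n ℂ) : cmap (X - Y) = cmap X - cmap Y := by ext i j; simp [cmap]
lemma cmap_neg (X : Matrix n n ℂ) : cmap (-X) = -cmap X := by ext i j; simp [cmap]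
lemma cmap_smul (c : ℂ) (X : Matrix n n ℂ) :
    cmap (c • X) = (starRingEnd ℂ c) • cmap X := by ext i j; simp [cmap]
lemma cmap_cmap (X : Matrix n n ℂ) : cmap (cmap X) = X := by ext i j; simp [cmap]
lemma cmap_conjT (X : Matrix n n ℂ) : (cmap X)ᴴ = cmap (Xᴴ) := by ext i j; simp [cmap]

noncomputable def oc (K X : Matrix n n ℂ) : Matrix n n ℂ := K * cmap X * Kᴴ

variable {K : Matrix n n ℂ} {ε : ℂ}

lemma oc_mul (hK1 : Kᴴ * K = 1) (X Y : Matrix n n ℂ) :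
    oc K (X * Y) = oc K X * oc K Y := by
  simp only [oc, cmap_mul]
  have h : K * cmap X * Kᴴ * (K * cmap Y * Kᴴ) = K * cmap X * (Kᴴ * K) * cmap Y * Kᴴ := by
    noncomm_ring
  rw [h, hK1, mul_one]
  noncomm_ring

lemma oc_add (X Y : Matrix n n ℂ) : oc K (X + Y) = oc K X + oc K Y := by
  simp only [oc, cmap_add]; noncomm_ring

lemma oc_sub (X Y : Matrix n n ℂ) : oc K (X - Y) = oc K X - oc K Y := by
  simp only [oc, cmap_sub]; noncomm_ring

lemma oc_neg (X : Matrix n n ℂ) : oc K (-X) = -oc K X := by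
  simp [oc, cmap_neg]

lemma oc_smul (c : ℂ) (X : Matrix n n ℂ) :
    oc K (c • X) = (starRingEnd ℂ c) • oc K X := by
  simp [oc, cmap_smul, smul_mul_assoc, mul_smul_comm]

lemma oc_conjT (X : Matrix n n ℂ) : (oc K X)ᴴ = oc K (Xᴴ) := by
  simp [oc, Matrix.conjTranspose_mul, cmap_conjT, mul_assoc]

lemma cmap_K (hK1 : Kᴴ * K = 1)
    (hJ2 : K * K.map (starRingEnd ℂ) = ε • (1 : Matrix n n ℂ)) :
    cmap K = ε • Kᴴ := by
  have h : Kᴴ * (K * cmap K) = Kᴴ * (ε • (1 : Matrix n n ℂ)) := by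
    rw [show (cmap K : Matrix n n ℂ) = K.map (starRingEnd ℂ) from rfl, hJ2]
  rw [← mul_assoc, hK1, one_mul] at h
  rw [h, mul_smul_comm, mul_one]

lemma cmap_KH (hK1 : Kᴴ * K = 1) (hε : ε = 1 ∨ ε = -1)
    (hJ2 : K * K.map (starRingEnd ℂ) = ε • (1 : Matrix n n ℂ)) :
    cmap (Kᴴ) = ε • K := by
  have hεr : starRingEnd ℂ ε = ε := by rcases hε with h | h <;> simp [h]
  rw [← cmap_conjT, cmap_K hK1 hJ2, Matrix.conjTranspose_smul,
    Matrix.conjTranspose_conjTranspose]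
  rw [show (star ε : ℂ) = ε from hεr]

lemma oc_oc (hK1 : Kᴴ * K = 1) (hK2 : K * Kᴴ = 1) (hε : ε = 1 ∨ ε = -1)
    (hJ2 : K * K.map (starRingEnd ℂ) = ε • (1 : Matrix n n ℂ)) (X : Matrix n n ℂ) :
    oc K (oc K X) = X := by
  have hε2 : ε * ε = 1 := by rcases hε with h | h <;> simp [h]
  simp only [oc, cmap_mul, cmap_cmap, cmap_K hK1 hJ2, cmap_KH hK1 hε hJ2]
  have h : K * (Kᴴ * X * K) * Kᴴ = (K * Kᴴ) * X * (K * Kᴴ) := by noncomm_ring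
  simp only [smul_mul_assoc, mul_smul_comm, smul_smul, hε2, one_smul, h, hK2, one_mul, mul_one]


lemma oc_gamma {Γ : Matrix n n ℂ} {ε'' : ℂ}
    (hε'' : ε'' = 1 ∨ ε'' = -1) (hΓsa : Γᴴ = Γ)
    (hJΓ : K * Γ.map (starRingEnd ℂ) = ε'' • (Γ * K)) (X : Matrix n n ℂ) :
    Γ * oc K X * Γ = oc K (Γ * X * Γ) := by
  have hε2 : ε'' * ε'' = 1 := by rcases hε'' with h | h <;> simp [h]
  have hεr : (star ε'' : ℂ) = ε'' := by rcases hε'' with h | h <;> simp [h]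
  have hJΓ' : K * cmap Γ = ε'' • (Γ * K) := hJΓ
  have hΓK : Γ * K = ε'' • (K * cmap Γ) := by
    rw [hJΓ', smul_smul, hε2, one_smul]
  have hcΓKH : cmap Γ * Kᴴ = ε'' • (Kᴴ * Γ) := by
    have h := congrArg Matrix.conjTranspose hJΓ'
    rw [Matrix.conjTranspose_mul, cmap_conjT, hΓsa, Matrix.conjTranspose_smul,
      Matrix.conjTranspose_mul, hΓsa] at h
    rw [h, hεr]
  have hKHΓ : Kᴴ * Γ = ε'' • (cmap Γ * Kᴴ) := by
    rw [hcΓKH, smul_smul, hε2, one_smul]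
  have h1 : Γ * oc K X * Γ = (Γ * K) * cmap X * (Kᴴ * Γ) := by
    simp only [oc]; noncomm_ring
  rw [h1, hΓK, hKHΓ]
  simp only [smul_mul_assoc, mul_smul_comm, smul_smul, hε2, one_smul, oc, cmap_mul]
  noncomm_ring


noncomputable def mE : Matrix n n ℂ ≃ₗ[ℂ] EuclideanSpace ℂ (n × n) where
  toFun X := WithLp.toLp 2 fun p : n × n => X p.1 p.2
  map_add' X Y := rfl
  map_smul' c X := rfl
  invFun v := Matrix.of fun i j => v (i, j)
  left_inv X := rfl
  right_inv v := rfl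

lemma inner_mE (X Y : Matrix n n ℂ) :
    (inner ℂ (mE X) (mE Y) : ℂ) = Matrix.trace (Xᴴ * Y) := by
  simp only [mE, LinearEquiv.coe_mk, PiLp.inner_apply, RCLike.inner_apply,
    Matrix.trace, Matrix.diag, Matrix.mul_apply, Matrix.conjTranspose_apply,
    Fintype.sum_prod_type, starRingEnd_apply]
  rw [Finset.sum_comm]
  exact Finset.sum_congr rfl fun _ _ => Finset.sum_congr rfl fun _ _ => mul_comm _ _


lemma exists_split {A : Type*} (R Q : A → Matrix n n ℂ)
    (hstar : ∀ a, ∃ b, (R a)ᴴ = R b)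
    (hRQ : ∀ a b, R a * Q b = Q b * R a)
    (D : Matrix n n ℂ)
    (hfirst : ∀ a b, (D * R a - R a * D) * Q b = Q b * (D * R a - R a * D)) :
    ∃ θ η : Matrix n n ℂ, D = θ + η ∧ (∀ b, θ * Q b = Q b * θ)
      ∧ (∀ a, η * R a = R a * η) := by
  classical
  set e : Matrix n n ℂ ≃ₗ[ℂ] EuclideanSpace ℂ (n × n) := mE
  let S : Submodule ℂ (EuclideanSpace ℂ (n × n)) :=
    { carrier := {v | ∀ b, e.symm v * Q b = Q b * e.symm v}
      add_mem' := fun hx hy b => by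
        rw [map_add, add_mul, mul_add, hx b, hy b]
      zero_mem' := fun b => by simp
      smul_mem' := fun c x hx b => by
        rw [_root_.map_smul, smul_mul_assoc, mul_smul_comm, hx b] }
  have memS : ∀ X : Matrix n n ℂ, e X ∈ S ↔ ∀ b, X * Q b = Q b * X := by
    intro X
    constructor
    · intro h b; have := h b; rwa [e.symm_apply_apply] at this
    · intro h b; rw [e.symm_apply_apply]; exact h b
  have memS_mul : ∀ X Y : Matrix n n ℂ, (∀ b, X * Q b = Q b * X) →
      (∀ b, Y * Q b = Q b * Y) → ∀ b, (X * Y) * Q b = Q b * (X * Y) := by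
    intro X Y hX hY b
    rw [mul_assoc, hY b, ← mul_assoc, hX b, mul_assoc]
  set p : EuclideanSpace ℂ (n × n) := (S.orthogonalProjectionOnto (e D) : EuclideanSpace ℂ (n × n))
    with hp
  set θ : Matrix n n ℂ := e.symm p with hθ
  have hθS : ∀ b, θ * Q b = Q b * θ := (S.orthogonalProjectionOnto (e D)).2
  have heθ : e θ = p := e.apply_symm_apply p
  set η : Matrix n n ℂ := D - θ with hη
  have hηperp : e η ∈ Sᗮ := by
    rw [hη, map_sub, heθ, hp]
    exact Submodule.sub_starProjection_mem_orthogonal (e D)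
  refine ⟨θ, η, by rw [hη]; abel, hθS, ?_⟩
  intro a
  have hZ : η * R a - R a * η = 0 := by
    have hZS : e (η * R a - R a * η) ∈ S := by
      rw [memS]
      intro b
      have h1 : ∀ b, (D * R a - R a * D) * Q b = Q b * (D * R a - R a * D) := hfirst a
      have h2 : ∀ b, (θ * R a - R a * θ) * Q b = Q b * (θ * R a - R a * θ) := by
        intro b
        have hA := memS_mul θ (R a) hθS (fun b => hRQ a b) b
        have hB := memS_mul (R a) θ (fun b => hRQ a b) hθS b
        rw [sub_mul, mul_sub, hA, hB]
      have hzz : η * R a - R a * η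
          = (D * R a - R a * D) - (θ * R a - R a * θ) := by rw [hη]; noncomm_ring
      rw [hzz, sub_mul, mul_sub, h1 b, h2 b]
    have hZperp : e (η * R a - R a * η) ∈ Sᗮ := by
      rw [Submodule.mem_orthogonal]
      intro u hu
      set X : Matrix n n ℂ := e.symm u with hX
      have hXS : ∀ b, X * Q b = Q b * X := hu
      have huX : u = e X := (e.apply_symm_apply u).symm
      obtain ⟨a', ha'⟩ := hstar a
      have hη0 : ∀ Y : Matrix n n ℂ, (∀ b, Y * Q b = Q b * Y) →
          (inner ℂ (e Y) (e η) : ℂ) = 0 := by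
        intro Y hY
        exact hηperp (e Y) ((memS Y).2 hY)
      rw [huX, map_sub, inner_sub_right, inner_mE, inner_mE]
      have t1 : Matrix.trace (Xᴴ * (η * R a)) = Matrix.trace ((X * (R a)ᴴ)ᴴ * η) := by
        rw [Matrix.conjTranspose_mul, Matrix.conjTranspose_conjTranspose,
          ← mul_assoc Xᴴ η (R a)]
        exact Matrix.trace_mul_cycle Xᴴ η (R a)
      have t2 : Matrix.trace (Xᴴ * (R a * η)) = Matrix.trace (((R a)ᴴ * X)ᴴ * η) := by
        rw [Matrix.conjTranspose_mul, Matrix.conjTranspose_conjTranspose,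
          ← mul_assoc Xᴴ (R a) η]
      have m1 : ∀ b, (X * (R a)ᴴ) * Q b = Q b * (X * (R a)ᴴ) := by
        rw [ha']; exact memS_mul X (R a') hXS (fun b => hRQ a' b)
      have m2 : ∀ b, ((R a)ᴴ * X) * Q b = Q b * ((R a)ᴴ * X) := by
        rw [ha']; exact memS_mul (R a') X (fun b => hRQ a' b) hXS
      rw [t1, t2, ← inner_mE, ← inner_mE, hη0 _ m1, hη0 _ m2, sub_zero]
    have : (inner ℂ (e (η * R a - R a * η)) (e (η * R a - R a * η)) : ℂ) = 0 :=
      hZperp _ hZS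
    have h0 : e (η * R a - R a * η) = 0 := inner_self_eq_zero.mp this
    have := congrArg e.symm h0
    rwa [e.symm_apply_apply, map_zero] at this
  have := sub_eq_zero.mp hZ
  exact this

end DiracDecomp


open DiracDecomp

/-- Every Dirac operator D of a finite real spectral triple
decomposes as D = θ + ε′JθJ⁻¹ with θ self-adjoint, commuting with the right
action Jρ(a)J⁻¹, and anticommuting (s even) or commuting (s odd) with Γ;
conversely any such θ defines a Dirac operator.  The antilinear real structure
is represented as J(v) = K (star v) with K unitary. -/
theorem dirac_operator_decomposition
    (N : ℕ) (A : Type) [Ring A] [StarRing A] [Algebra ℝ A] [FiniteDimensional ℝ A]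
    (s : ℤ) (ε ε' ε'' : ℂ)
    (hε : ε = 1 ∨ ε = -1) (hε' : ε' = 1 ∨ ε' = -1) (hε'' : ε'' = 1 ∨ ε'' = -1)
    (ρ : A →ₐ[ℝ] Matrix (Fin N) (Fin N) ℂ)
    (hρstar : ∀ a, ρ (star a) = (ρ a)ᴴ)
    (hρinj : Function.Injective ρ)
    (K : Matrix (Fin N) (Fin N) ℂ)
    (hK1 : Kᴴ * K = 1) (hK2 : K * Kᴴ = 1)
    (hJ2 : K * K.map (starRingEnd ℂ) = ε • (1 : Matrix (Fin N) (Fin N) ℂ))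
    (Γ : Matrix (Fin N) (Fin N) ℂ)
    (hΓsa : Γᴴ = Γ) (hΓ2 : Γ * Γ = 1)
    (hΓρ : ∀ a, Γ * ρ a = ρ a * Γ)
    (hJΓ : K * Γ.map (starRingEnd ℂ) = ε'' • (Γ * K))
    -- zeroth-order (bimodule) condition
    (hbimod : ∀ a b : A,
      Commute (ρ a) (K * (ρ b).map (starRingEnd ℂ) * Kᴴ))
    (D : Matrix (Fin N) (Fin N) ℂ)
    (hDsa : Dᴴ = D)
    (hDΓeven : Even s → D * Γ = -(Γ * D))
    (hDΓodd : ¬ Even s → D * Γ = Γ * D)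
    (hJD : K * D.map (starRingEnd ℂ) = ε' • (D * K))
    -- first-order condition
    (hfirst : ∀ a b : A,
      Commute (D * ρ a - ρ a * D) (K * (ρ b).map (starRingEnd ℂ) * Kᴴ)) :
    -- decomposition
    (∃ θ : Matrix (Fin N) (Fin N) ℂ,
      θᴴ = θ
      ∧ (∀ a : A, Commute θ (K * (ρ a).map (starRingEnd ℂ) * Kᴴ))
      ∧ (Even s → θ * Γ + Γ * θ = 0)
      ∧ (¬ Even s → θ * Γ = Γ * θ)
      ∧ D = θ + ε' • (K * θ.map (starRingEnd ℂ) * Kᴴ))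
    -- converse: any such θ gives a Dirac operator
    ∧ (∀ θ : Matrix (Fin N) (Fin N) ℂ,
        θᴴ = θ →
        (∀ a : A, Commute θ (K * (ρ a).map (starRingEnd ℂ) * Kᴴ)) →
        (Even s → θ * Γ + Γ * θ = 0) →
        (¬ Even s → θ * Γ = Γ * θ) →
        (θ + ε' • (K * θ.map (starRingEnd ℂ) * Kᴴ))ᴴ
            = θ + ε' • (K * θ.map (starRingEnd ℂ) * Kᴴ)
        ∧ (Even s → (θ + ε' • (K * θ.map (starRingEnd ℂ) * Kᴴ)) * Γ
            = -(Γ * (θ + ε' • (K * θ.map (starRingEnd ℂ) * Kᴴ))))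
        ∧ (¬ Even s → (θ + ε' • (K * θ.map (starRingEnd ℂ) * Kᴴ)) * Γ
            = Γ * (θ + ε' • (K * θ.map (starRingEnd ℂ) * Kᴴ)))
        ∧ K * (θ + ε' • (K * θ.map (starRingEnd ℂ) * Kᴴ)).map (starRingEnd ℂ)
            = ε' • ((θ + ε' • (K * θ.map (starRingEnd ℂ) * Kᴴ)) * K)
        ∧ ∀ a b : A,
            Commute ((θ + ε' • (K * θ.map (starRingEnd ℂ) * Kᴴ)) * ρ a
                - ρ a * (θ + ε' • (K * θ.map (starRingEnd ℂ) * Kᴴ)))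
              (K * (ρ b).map (starRingEnd ℂ) * Kᴴ)) := by
  classical
  have hε's : (star ε' : ℂ) = ε' := by rcases hε' with rfl | rfl <;> simp
  have hε'c : (starRingEnd ℂ) ε' = ε' := hε's
  have hε'sq : ε' ^ 2 = 1 := by rcases hε' with rfl | rfl <;> ring
  have h2c : (star (2⁻¹ : ℂ)) = 2⁻¹ := by simp
  have h2c' : (starRingEnd ℂ) (2⁻¹ : ℂ) = 2⁻¹ := h2c
  -- predicate: commuting with the right action
  let P : Matrix (Fin N) (Fin N) ℂ → Prop :=
    fun X => ∀ b : A, X * oc K (ρ b) = oc K (ρ b) * X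
  have Pmul : ∀ {X Y}, P X → P Y → P (X * Y) := by
    intro X Y hX hY b
    rw [mul_assoc, hY b, ← mul_assoc, hX b, mul_assoc]
  have Padd : ∀ {X Y}, P X → P Y → P (X + Y) := by
    intro X Y hX hY b; rw [add_mul, mul_add, hX b, hY b]
  have Psub : ∀ {X Y}, P X → P Y → P (X - Y) := by
    intro X Y hX hY b; rw [sub_mul, mul_sub, hX b, hY b]
  have Psmul : ∀ (t : ℂ) {X}, P X → P (t • X) := by
    intro t X hX b; rw [smul_mul_assoc, mul_smul_comm, hX b]
  have hocρH : ∀ b : A, (oc K (ρ b))ᴴ = oc K (ρ (star b)) := by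
    intro b; rw [oc_conjT, hρstar]
  have PconjT : ∀ {X}, P X → P Xᴴ := by
    intro X hX b
    have h2 : (oc K (ρ (star b)))ᴴ = oc K (ρ b) := by
      rw [hocρH, star_star]
    calc Xᴴ * oc K (ρ b) = Xᴴ * (oc K (ρ (star b)))ᴴ := by rw [h2]
      _ = (oc K (ρ (star b)) * X)ᴴ := by rw [Matrix.conjTranspose_mul]
      _ = (X * oc K (ρ (star b)))ᴴ := by rw [hX (star b)]
      _ = (oc K (ρ (star b)))ᴴ * Xᴴ := by rw [Matrix.conjTranspose_mul]
      _ = oc K (ρ b) * Xᴴ := by rw [h2]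
  have PΓ : P Γ := by
    intro b
    have h1 : Γ * ρ b * Γ = ρ b := by rw [hΓρ b, mul_assoc, hΓ2, mul_one]
    have h2 : Γ * oc K (ρ b) * Γ = oc K (ρ b) := by
      rw [oc_gamma hε'' hΓsa hJΓ, h1]
    calc Γ * oc K (ρ b) = Γ * oc K (ρ b) * (Γ * Γ) := by rw [hΓ2, mul_one]
      _ = (Γ * oc K (ρ b) * Γ) * Γ := by rw [← mul_assoc]
      _ = oc K (ρ b) * Γ := by rw [h2]
  have hocD : oc K D = ε' • D := by
    have h : K * D.map (starRingEnd ℂ) * Kᴴ = (ε' • (D * K)) * Kᴴ := by rw [hJD]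
    calc oc K D = K * D.map (starRingEnd ℂ) * Kᴴ := rfl
      _ = (ε' • (D * K)) * Kᴴ := h
      _ = ε' • D := by rw [smul_mul_assoc, mul_assoc, hK2, mul_one]
  constructor
  · -- forward direction
    obtain ⟨θ0, η0, hD0, hθ0S, hη0C⟩ :=
      exists_split (fun a : A => ρ a) (fun b : A => oc K (ρ b))
        (fun a => ⟨star a, (hρstar a).symm⟩) (fun a b => hbimod a b) D
        (fun a b => hfirst a b)
    have Pθ0 : P θ0 := hθ0S
    have Pocη0 : P (oc K η0) := by
      intro b
      rw [← oc_mul hK1, ← oc_mul hK1, hη0C b]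
    obtain ⟨θ1, hθ1def⟩ : ∃ t : Matrix (Fin N) (Fin N) ℂ,
        t = (2⁻¹ : ℂ) • (θ0 + ε' • oc K η0) := ⟨_, rfl⟩
    have Pθ1 : P θ1 := by rw [hθ1def]; exact Psmul _ (Padd Pθ0 (Psmul _ Pocη0))
    have hocθ1 : oc K θ1 = (2⁻¹ : ℂ) • (oc K θ0 + ε' • η0) := by
      rw [hθ1def, oc_smul, oc_add, oc_smul, oc_oc hK1 hK2 hε hJ2, hε'c, h2c']
    have hocθ0eq : oc K θ0 = ε' • (θ0 + η0) - oc K η0 := by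
      refine eq_sub_of_add_eq ?_
      rw [← oc_add, ← hD0, hocD, hD0]
    have hdec1 : D = θ1 + ε' • oc K θ1 := by
      rw [hocθ1, hθ1def, hocθ0eq]
      nth_rewrite 1 [hD0]
      match_scalars <;> first | ring1 | (ring_nf; simp only [hε'sq]; try ring1)
    obtain ⟨θ2, hθ2def⟩ : ∃ t : Matrix (Fin N) (Fin N) ℂ,
        t = (2⁻¹ : ℂ) • (θ1 + θ1ᴴ) := ⟨_, rfl⟩
    have Pθ2 : P θ2 := by rw [hθ2def]; exact Psmul _ (Padd Pθ1 (PconjT Pθ1))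
    have hθ2sa : θ2ᴴ = θ2 := by
      rw [hθ2def, Matrix.conjTranspose_smul, Matrix.conjTranspose_add,
        Matrix.conjTranspose_conjTranspose, h2c, add_comm]
    have hdecH : D = θ1ᴴ + ε' • oc K (θ1ᴴ) := by
      have hDH := congrArg Matrix.conjTranspose hdec1
      rwa [hDsa, Matrix.conjTranspose_add, Matrix.conjTranspose_smul, oc_conjT, hε's] at hDH
    have hdec2 : D = θ2 + ε' • oc K θ2 := by
      have key : θ2 + ε' • oc K θ2
          = (2⁻¹ : ℂ) • (θ1 + ε' • oc K θ1) + (2⁻¹ : ℂ) • (θ1ᴴ + ε' • oc K (θ1ᴴ)) := by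
        rw [hθ2def, oc_smul, oc_add, h2c']
        match_scalars <;> ring1
      rw [key, ← hdec1, ← hdecH]
      match_scalars <;> ring1
    by_cases hs : Even s
    · -- even case
      have hΓDΓ : Γ * D * Γ = -D := by
        rw [mul_assoc, hDΓeven hs, mul_neg, ← mul_assoc, hΓ2, one_mul]
      have h3 : -D = Γ * θ2 * Γ + ε' • (Γ * oc K θ2 * Γ) := by
        rw [← hΓDΓ]
        nth_rewrite 1 [hdec2]
        simp only [mul_add, add_mul, smul_mul_assoc, mul_smul_comm, mul_assoc]
      obtain ⟨θf, hθfdef⟩ : ∃ t : Matrix (Fin N) (Fin N) ℂ,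
          t = (2⁻¹ : ℂ) • (θ2 - Γ * θ2 * Γ) := ⟨_, rfl⟩
      have hΓθ2ΓH : (Γ * θ2 * Γ)ᴴ = Γ * θ2 * Γ := by
        rw [Matrix.conjTranspose_mul, Matrix.conjTranspose_mul, hΓsa, hθ2sa, mul_assoc]
      refine ⟨θf, ?_, ?_, ?_, fun h => absurd hs h, ?_⟩
      · rw [hθfdef, Matrix.conjTranspose_smul, Matrix.conjTranspose_sub, hθ2sa, hΓθ2ΓH, h2c]
      · intro a
        have : P θf := by rw [hθfdef]; exact Psmul _ (Psub Pθ2 (Pmul (Pmul PΓ Pθ2) PΓ))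
        exact this a
      · intro _
        have e1 : θf * Γ = (2⁻¹ : ℂ) • (θ2 * Γ - Γ * θ2) := by
          rw [hθfdef, smul_mul_assoc, sub_mul, mul_assoc (Γ * θ2) Γ Γ, hΓ2, mul_one]
        have e2 : Γ * θf = (2⁻¹ : ℂ) • (Γ * θ2 - θ2 * Γ) := by
          rw [hθfdef, mul_smul_comm, mul_sub, ← mul_assoc Γ (Γ * θ2) Γ,
            ← mul_assoc Γ Γ θ2, hΓ2, one_mul]
        rw [e1, e2]
        match_scalars <;> ring1
      · show D = θf + ε' • oc K θf
        have hocθf : oc K θf = (2⁻¹ : ℂ) • (oc K θ2 - Γ * oc K θ2 * Γ) := by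
          rw [hθfdef, oc_smul, h2c', oc_sub, ← oc_gamma hε'' hΓsa hJΓ]
        rw [hocθf, hθfdef]
        calc D = (2⁻¹ : ℂ) • (θ2 + ε' • oc K θ2)
              - (2⁻¹ : ℂ) • (Γ * θ2 * Γ + ε' • (Γ * oc K θ2 * Γ)) := by
              rw [← hdec2, ← h3]; match_scalars <;> ring1
          _ = (2⁻¹ : ℂ) • (θ2 - Γ * θ2 * Γ)
              + ε' • ((2⁻¹ : ℂ) • (oc K θ2 - Γ * oc K θ2 * Γ)) := by
              match_scalars <;> ring1
    · -- odd case
      have hΓDΓ : Γ * D * Γ = D := by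
        rw [mul_assoc, hDΓodd hs, ← mul_assoc, hΓ2, one_mul]
      have h3 : D = Γ * θ2 * Γ + ε' • (Γ * oc K θ2 * Γ) := by
        rw [← hΓDΓ]
        nth_rewrite 1 [hdec2]
        simp only [mul_add, add_mul, smul_mul_assoc, mul_smul_comm, mul_assoc]
      obtain ⟨θf, hθfdef⟩ : ∃ t : Matrix (Fin N) (Fin N) ℂ,
          t = (2⁻¹ : ℂ) • (θ2 + Γ * θ2 * Γ) := ⟨_, rfl⟩
      have hΓθ2ΓH : (Γ * θ2 * Γ)ᴴ = Γ * θ2 * Γ := by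
        rw [Matrix.conjTranspose_mul, Matrix.conjTranspose_mul, hΓsa, hθ2sa, mul_assoc]
      refine ⟨θf, ?_, ?_, fun h => absurd h hs, ?_, ?_⟩
      · rw [hθfdef, Matrix.conjTranspose_smul, Matrix.conjTranspose_add, hθ2sa, hΓθ2ΓH, h2c]
      · intro a
        have : P θf := by rw [hθfdef]; exact Psmul _ (Padd Pθ2 (Pmul (Pmul PΓ Pθ2) PΓ))
        exact this a
      · intro _
        have e1 : θf * Γ = (2⁻¹ : ℂ) • (θ2 * Γ + Γ * θ2) := by
          rw [hθfdef, smul_mul_assoc, add_mul, mul_assoc (Γ * θ2) Γ Γ, hΓ2, mul_one]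
        have e2 : Γ * θf = (2⁻¹ : ℂ) • (Γ * θ2 + θ2 * Γ) := by
          rw [hθfdef, mul_smul_comm, mul_add, ← mul_assoc Γ (Γ * θ2) Γ,
            ← mul_assoc Γ Γ θ2, hΓ2, one_mul]
        rw [e1, e2, add_comm (θ2 * Γ) (Γ * θ2)]
      · show D = θf + ε' • oc K θf
        have hocθf : oc K θf = (2⁻¹ : ℂ) • (oc K θ2 + Γ * oc K θ2 * Γ) := by
          rw [hθfdef, oc_smul, h2c', oc_add, ← oc_gamma hε'' hΓsa hJΓ]
        rw [hocθf, hθfdef]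
        calc D = (2⁻¹ : ℂ) • (θ2 + ε' • oc K θ2)
              + (2⁻¹ : ℂ) • (Γ * θ2 * Γ + ε' • (Γ * oc K θ2 * Γ)) := by
              rw [← hdec2, ← h3]; match_scalars <;> ring1
          _ = (2⁻¹ : ℂ) • (θ2 + Γ * θ2 * Γ)
              + ε' • ((2⁻¹ : ℂ) • (oc K θ2 + Γ * oc K θ2 * Γ)) := by
              match_scalars <;> ring1
  · -- converse direction
    intro θ hθsa hθcomm hθeven hθodd
    have hocθρ : ∀ a : A, oc K θ * ρ a = ρ a * oc K θ := by
      intro a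
      have h0 : θ * oc K (ρ a) = oc K (ρ a) * θ := hθcomm a
      have h := congrArg (oc K) h0
      rwa [oc_mul hK1, oc_mul hK1, oc_oc hK1 hK2 hε hJ2] at h
    refine ⟨?_, ?_, ?_, ?_, ?_⟩
    · show (θ + ε' • oc K θ)ᴴ = θ + ε' • oc K θ
      rw [Matrix.conjTranspose_add, Matrix.conjTranspose_smul, oc_conjT, hθsa, hε's]
    · intro hse
      show (θ + ε' • oc K θ) * Γ = -(Γ * (θ + ε' • oc K θ))
      have hθΓ : θ * Γ = -(Γ * θ) := eq_neg_of_add_eq_zero_left (hθeven hse)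
      have hΓθΓ : Γ * θ * Γ = -θ := by
        rw [mul_assoc, hθΓ, mul_neg, ← mul_assoc, hΓ2, one_mul]
      have hocθΓ : oc K θ * Γ = -(Γ * oc K θ) := by
        have h1 : Γ * oc K θ * Γ = -oc K θ := by
          rw [oc_gamma hε'' hΓsa hJΓ, hΓθΓ, oc_neg]
        calc oc K θ * Γ = (Γ * Γ) * oc K θ * Γ := by rw [hΓ2, one_mul]
          _ = Γ * (Γ * oc K θ * Γ) := by rw [mul_assoc, mul_assoc, mul_assoc]
          _ = -(Γ * oc K θ) := by rw [h1, mul_neg]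
      rw [add_mul, smul_mul_assoc, hθΓ, hocθΓ, mul_add, mul_smul_comm]
      match_scalars <;> ring1
    · intro hso
      show (θ + ε' • oc K θ) * Γ = Γ * (θ + ε' • oc K θ)
      have hθΓ : θ * Γ = Γ * θ := hθodd hso
      have hΓθΓ : Γ * θ * Γ = θ := by
        rw [mul_assoc, hθΓ, ← mul_assoc, hΓ2, one_mul]
      have hocθΓ : oc K θ * Γ = Γ * oc K θ := by
        have h1 : Γ * oc K θ * Γ = oc K θ := by
          rw [oc_gamma hε'' hΓsa hJΓ, hΓθΓ]
        calc oc K θ * Γ = (Γ * Γ) * oc K θ * Γ := by rw [hΓ2, one_mul]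
          _ = Γ * (Γ * oc K θ * Γ) := by rw [mul_assoc, mul_assoc, mul_assoc]
          _ = Γ * oc K θ := by rw [h1]
      rw [add_mul, smul_mul_assoc, hθΓ, hocθΓ, mul_add, mul_smul_comm]
    · show K * (θ + ε' • oc K θ).map (starRingEnd ℂ) = ε' • ((θ + ε' • oc K θ) * K)
      have h5 : oc K (θ + ε' • oc K θ) = ε' • (θ + ε' • oc K θ) := by
        rw [oc_add, oc_smul, hε'c, oc_oc hK1 hK2 hε hJ2]
        match_scalars <;> first | ring1 | (ring_nf; simp only [hε'sq]; try ring1)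
      have assoc1 : ∀ X : Matrix (Fin N) (Fin N) ℂ,
          K * X.map (starRingEnd ℂ) * (Kᴴ * K) = oc K X * K := by
        intro X
        show K * cmap X * (Kᴴ * K) = K * cmap X * Kᴴ * K
        rw [mul_assoc (K * cmap X) Kᴴ K]
      calc K * (θ + ε' • oc K θ).map (starRingEnd ℂ)
          = K * (θ + ε' • oc K θ).map (starRingEnd ℂ) * (Kᴴ * K) := by
            rw [hK1, mul_one]
        _ = oc K (θ + ε' • oc K θ) * K := assoc1 _
        _ = ε' • ((θ + ε' • oc K θ) * K) := by rw [h5, smul_mul_assoc]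
    · intro a b
      have hsimp : (θ + ε' • oc K θ) * ρ a - ρ a * (θ + ε' • oc K θ)
          = θ * ρ a - ρ a * θ := by
        rw [add_mul, mul_add, smul_mul_assoc, mul_smul_comm, hocθρ a]
        abel
      have hcomm : Commute (θ * ρ a - ρ a * θ) (oc K (ρ b)) :=
        ((hθcomm b).mul_left (hbimod a b)).sub_left ((hbimod a b).mul_left (hθcomm b))
      show Commute ((θ + ε' • oc K θ) * ρ a - ρ a * (θ + ε' • oc K θ)) (oc K (ρ b))
      rw [hsimp]
      exact hcomm
end

section
/- Every unitary bimodule map u on a type (0,0) matrix geometry H₀ (whose irreducible sub-bimodules are pairwise inequivalent) satisfying u* = J₀uJ₀⁻¹ has a square root: there exists a unitary bimodule map r with r² = u and r* = J₀rJ₀⁻¹. -/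
open Matrix Polynomial

lemma myaux.commute_aeval {Rg Ag : Type*} [CommRing Rg] [Ring Ag] [Algebra Rg Ag]
    {u x : Ag} (h : Commute u x) (q : Rg[X]) : Commute (aeval u q) x := by
  induction q using Polynomial.induction_on' with
  | add p q hp hq => rw [map_add]; exact hp.add_left hq
  | monomial n a =>
    rw [aeval_monomial]
    exact (Algebra.commute_algebraMap_left a x).mul_left (h.pow_left n)

lemma myaux.conj_pow {N : ℕ} (K X : Matrix (Fin N) (Fin N) ℂ)
    (hK1 : Kᴴ * K = 1) (hK2 : K * Kᴴ = 1) (n : ℕ) :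
    K * X ^ n * Kᴴ = (K * X * Kᴴ) ^ n := by
  have hKK : ∀ Y : Matrix (Fin N) (Fin N) ℂ, Kᴴ * (K * Y) = Y := fun Y => by
    rw [← mul_assoc, hK1, one_mul]
  induction n with
  | zero => simpa using hK2
  | succ n ih =>
    rw [pow_succ, pow_succ, ← ih]
    simp only [mul_assoc, hKK]

lemma myaux.map_pow {N : ℕ} (u : Matrix (Fin N) (Fin N) ℂ) (n : ℕ) :
    (u ^ n).map (starRingEnd ℂ) = (u.map (starRingEnd ℂ)) ^ n := by
  induction n with
  | zero => simp [Matrix.map_one]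
  | succ m ihm => rw [pow_succ, pow_succ, Matrix.map_mul, ihm]

lemma myaux.J_aeval {N : ℕ} (K u : Matrix (Fin N) (Fin N) ℂ)
    (hK1 : Kᴴ * K = 1) (hK2 : K * Kᴴ = 1)
    (huJ : uᴴ = K * u.map (starRingEnd ℂ) * Kᴴ) (q : ℂ[X]) :
    (aeval u q)ᴴ = K * (aeval u q).map (starRingEnd ℂ) * Kᴴ := by
  induction q using Polynomial.induction_on' with
  | add p q hp hq =>
    rw [map_add, conjTranspose_add, Matrix.map_add _ (fun a b => map_add _ a b), hp, hq,
      mul_add, add_mul]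
  | monomial n a =>
    rw [aeval_monomial]
    have h1 : (algebraMap ℂ (Matrix (Fin N) (Fin N) ℂ) a) * u ^ n = a • u ^ n := by
      rw [Algebra.smul_def]
    have h2 : (a • u ^ n).map (starRingEnd ℂ)
        = (starRingEnd ℂ) a • (u ^ n).map (starRingEnd ℂ) := by
      ext i j
      simp [Matrix.smul_apply, _root_.map_mul]
    rw [h1, conjTranspose_smul, conjTranspose_pow, h2, myaux.map_pow, Matrix.mul_smul,
      Matrix.smul_mul, myaux.conj_pow K _ hK1 hK2, ← huJ]
    rfl

open scoped Matrix.Norms.L2Operator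

/-- On a type (0,0) matrix geometry whose irreducible
sub-bimodules are pairwise inequivalent (encoded by the commutant of the pair
of actions being commutative), every unitary bimodule map u with
u* = J₀uJ₀⁻¹ admits a square root r with the same properties.  The antiunitary
J₀ is represented as v ↦ K (star v) with K unitary, and it exchanges the left
and right actions. -/
theorem unitary_bimodule_map_sqrt
    (N : ℕ) (A : Type) [Ring A] [StarRing A]
    (L R : A → Matrix (Fin N) (Fin N) ℂ)
    (hLmul : ∀ a b, L (a * b) = L a * L b) (hL1 : L 1 = 1)
    (hLadd : ∀ a b, L (a + b) = L a + L b)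
    (hLstar : ∀ a, L (star a) = (L a)ᴴ)
    (hRmul : ∀ a b, R (a * b) = R b * R a) (hR1 : R 1 = 1)
    (hRadd : ∀ a b, R (a + b) = R a + R b)
    (hRstar : ∀ a, R (star a) = (R a)ᴴ)
    (hLR : ∀ a b, Commute (L a) (R b))
    (K : Matrix (Fin N) (Fin N) ℂ)
    (hK1 : Kᴴ * K = 1) (hK2 : K * Kᴴ = 1)
    -- J₀ exchanges the left and right actions
    (hJexch : ∀ a, K * (L a).map (starRingEnd ℂ) * Kᴴ = R (star a))
    -- the irreducible sub-bimodules are pairwise inequivalent: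
    -- the commutant of the two actions is commutative
    (hmultfree : ∀ u v : Matrix (Fin N) (Fin N) ℂ,
      (∀ a, Commute u (L a) ∧ Commute u (R a)) →
      (∀ a, Commute v (L a) ∧ Commute v (R a)) → Commute u v)
    (u : Matrix (Fin N) (Fin N) ℂ)
    (hu1 : uᴴ * u = 1) (hu2 : u * uᴴ = 1)
    (hubi : ∀ a, Commute u (L a) ∧ Commute u (R a))
    (huJ : uᴴ = K * u.map (starRingEnd ℂ) * Kᴴ) :
    ∃ r : Matrix (Fin N) (Fin N) ℂ,
      rᴴ * r = 1 ∧ r * rᴴ = 1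
      ∧ (∀ a, Commute r (L a) ∧ Commute r (R a))
      ∧ r * r = u
      ∧ rᴴ = K * r.map (starRingEnd ℂ) * Kᴴ := by
  classical
  letI : CStarAlgebra (Matrix (Fin N) (Fin N) ℂ) := {}
  haveI hnormal : IsStarNormal u :=
    ⟨show star u * u = u * star u by
      rw [Matrix.star_eq_conjTranspose, hu1, hu2]⟩
  have humem : u ∈ unitary (Matrix (Fin N) (Fin N) ℂ) :=
    ⟨by rw [Matrix.star_eq_conjTranspose]; exact hu1,
     by rw [Matrix.star_eq_conjTranspose]; exact hu2⟩
  have hcirc : ∀ z ∈ spectrum ℂ u, ‖z‖ = 1 := by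
    intro z hz
    have h := spectrum.subset_circle_of_unitary humem hz
    simpa using mem_sphere_zero_iff_norm.mp h
  have hfin : (spectrum ℂ u).Finite := u.finite_spectrum
  set g : ℂ → ℂ := fun z => Complex.exp (Complex.log z / 2) with hgdef
  set p : ℂ[X] := Lagrange.interpolate hfin.toFinset id g with hpdef
  have hps : ∀ z ∈ spectrum ℂ u, p.eval z = g z := by
    intro z hz
    have hzs : z ∈ hfin.toFinset := hfin.mem_toFinset.mpr hz
    exact Lagrange.eval_interpolate_at_node (v := id) (r := g)
      (Set.injOn_id _) hzs
  have hg2 : ∀ z ∈ spectrum ℂ u, g z * g z = z := by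
    intro z hz
    have hz0 : z ≠ 0 := by
      intro h; rw [h] at hz
      have := hcirc 0 hz; simp at this
    show Complex.exp _ * Complex.exp _ = z
    rw [← Complex.exp_add, add_halves, Complex.exp_log hz0]
  have hgabs : ∀ z ∈ spectrum ℂ u, (starRingEnd ℂ) (g z) * g z = 1 := by
    intro z hz
    have habs : ‖g z‖ = 1 := by
      show ‖Complex.exp _‖ = 1
      rw [Complex.norm_exp]
      have h2 : (Complex.log z / 2).re = (Complex.log z).re / 2 := by
        rw [show (2 : ℂ) = ((2 : ℝ) : ℂ) by norm_num, Complex.div_ofReal_re]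
      rw [h2, Complex.log_re, hcirc z hz, Real.log_one, zero_div, Real.exp_zero]
    rw [mul_comm, Complex.mul_conj, Complex.normSq_eq_norm_sq, habs]
    norm_num
  set r : Matrix (Fin N) (Fin N) ℂ := aeval u p with hrdef
  have hrcfc : r = cfc (fun z => p.eval z) u := (cfc_polynomial p u).symm
  have contp : ContinuousOn (fun z => p.eval z) (spectrum ℂ u) :=
    (Polynomial.continuous p).continuousOn
  have contpc : ContinuousOn (fun z => (starRingEnd ℂ) (p.eval z)) (spectrum ℂ u) :=
    (Complex.continuous_conj.comp (Polynomial.continuous p)).continuousOn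
  have hstarr : rᴴ = cfc (fun z => (starRingEnd ℂ) (p.eval z)) u := by
    rw [← Matrix.star_eq_conjTranspose, hrcfc, ← cfc_star]
    rfl
  have hrr : r * r = u := by
    rw [hrcfc, ← cfc_mul _ _ u contp contp]
    have : cfc (fun z : ℂ => p.eval z * p.eval z) u = cfc (fun z : ℂ => z) u :=
      cfc_congr fun z hz => by rw [hps z hz]; exact hg2 z hz
    rw [this, cfc_id' ℂ u]
  have hr1 : rᴴ * r = 1 := by
    rw [hstarr, hrcfc, ← cfc_mul _ _ u contpc contp]
    have : cfc (fun z : ℂ => (starRingEnd ℂ) (p.eval z) * p.eval z) u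
        = cfc (fun _ : ℂ => (1 : ℂ)) u :=
      cfc_congr fun z hz => by rw [hps z hz]; exact hgabs z hz
    rw [this, cfc_const_one ℂ u]
  have hr2 : r * rᴴ = 1 := by
    rw [hstarr, hrcfc, ← cfc_mul _ _ u contp contpc]
    have : cfc (fun z : ℂ => p.eval z * (starRingEnd ℂ) (p.eval z)) u
        = cfc (fun _ : ℂ => (1 : ℂ)) u :=
      cfc_congr fun z hz => by rw [hps z hz, mul_comm]; exact hgabs z hz
    rw [this, cfc_const_one ℂ u]
  refine ⟨r, hr1, hr2, fun a =>
    ⟨myaux.commute_aeval (hubi a).1 p, myaux.commute_aeval (hubi a).2 p⟩,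
    hrr, myaux.J_aeval K u hK1 hK2 huJ p⟩
end

section
/- The Grosse–Presnajder operator d̃ = 1 + Σ_{j<k} σʲσᵏ ⊗ [L_{jk}, ·] equals c − c₁ − c₂ + 1, where c₁ = −Σ_{j<k}𝔰_{jk}𝔰_{jk}, c₂ = −Σ_{j<k}Λ_{jk}Λ_{jk}, and c = −Σ_{j<k}(𝔰_{jk}+Λ_{jk})², with 𝔰_{jk} = −(σʲσᵏ−σᵏσʲ)/4 the spin generators and Λ_{jk} = [L_{jk},·] the adjoint action. -/
open Matrix

/-- The Hilbert space ℂ²⊗M(n,ℂ), encoded as pairs of n×n matrices. -/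
abbrev HGP (n : ℕ) := Fin 2 → Matrix (Fin n) (Fin n) ℂ

/-- The action of a 2×2 matrix on the spinor factor of ℂ²⊗M(n,ℂ). -/
noncomputable def opV {n : ℕ} (m : Matrix (Fin 2) (Fin 2) ℂ) (ψ : HGP n) : HGP n :=
  fun i => ∑ j, m i j • ψ j

/-- The adjoint action m ↦ [X,m] on the matrix factor. -/
noncomputable def adL {n : ℕ} (X : Matrix (Fin n) (Fin n) ℂ) (ψ : HGP n) : HGP n :=
  fun i => X * ψ i - ψ i * X

/-- The spin generators 𝔰_{jk} = −(σʲσᵏ − σᵏσʲ)/4. -/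
noncomputable def spinGen (σ : Fin 3 → Matrix (Fin 2) (Fin 2) ℂ) (j k : Fin 3) :
    Matrix (Fin 2) (Fin 2) ℂ :=
  (-(1/4) : ℂ) • (σ j * σ k - σ k * σ j)

/-- The set of ordered pairs j < k in {1,2,3}. -/
def pairs3 : Finset (Fin 3 × Fin 3) := Finset.univ.filter (fun p => p.1 < p.2)

/-- The Grosse–Presnajder operator
d̃ = 1 + Σ_{j<k} σʲσᵏ⊗[L_{jk},·] equals c − c₁ − c₂ + 1, where
c₁ = −Σ_{j<k}𝔰_{jk}², c₂ = −Σ_{j<k}Λ_{jk}², c = −Σ_{j<k}(𝔰_{jk}+Λ_{jk})²,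
with 𝔰_{jk} the spin generators and Λ_{jk} = [L_{jk},·]. -/
theorem grosse_presnajder_casimir
    (n : ℕ) (σ : Fin 3 → Matrix (Fin 2) (Fin 2) ℂ)
    (hσ : ∀ j k, σ j * σ k + σ k * σ j =
      if j = k then (-2 : ℂ) • (1 : Matrix (Fin 2) (Fin 2) ℂ) else 0)
    (L : Fin 3 → Fin 3 → Matrix (Fin n) (Fin n) ℂ)
    (hLanti : ∀ j k, L j k = -L k j)
    (hLrel : ∀ j k l m, L j k * L l m - L l m * L j k =
      (if k = l then (1:ℂ) else 0) • L j m - (if k = m then (1:ℂ) else 0) • L j l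
        - (if j = l then (1:ℂ) else 0) • L k m + (if j = m then (1:ℂ) else 0) • L k l) :
    ∀ ψ : HGP n,
      (ψ + ∑ p ∈ pairs3, opV (σ p.1 * σ p.2) (adL (L p.1 p.2) ψ))
      = -- c
        (-(∑ p ∈ pairs3,
            (opV (spinGen σ p.1 p.2) (opV (spinGen σ p.1 p.2) ψ)
              + opV (spinGen σ p.1 p.2) (adL (L p.1 p.2) ψ)
              + adL (L p.1 p.2) (opV (spinGen σ p.1 p.2) ψ)
              + adL (L p.1 p.2) (adL (L p.1 p.2) ψ))))
        -- − c₁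
        - (-(∑ p ∈ pairs3, opV (spinGen σ p.1 p.2) (opV (spinGen σ p.1 p.2) ψ)))
        -- − c₂
        - (-(∑ p ∈ pairs3, adL (L p.1 p.2) (adL (L p.1 p.2) ψ)))
        + ψ := by
  intro ψ
  have comm : ∀ (m : Matrix (Fin 2) (Fin 2) ℂ) (X : Matrix (Fin n) (Fin n) ℂ)
      (φ : HGP n), opV m (adL X φ) = adL X (opV m φ) := by
    intro m X φ
    funext i
    simp only [opV, adL, smul_sub, Finset.sum_sub_distrib, Matrix.mul_sum,
      Matrix.sum_mul, Matrix.mul_smul, Matrix.smul_mul]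
  have hsmul : ∀ (c : ℂ) (m : Matrix (Fin 2) (Fin 2) ℂ) (φ : HGP n),
      opV (c • m) φ = c • opV m φ := by
    intro c m φ
    funext i
    simp [opV, Finset.smul_sum, smul_smul]
  have key : ∀ p ∈ pairs3,
      opV (σ p.1 * σ p.2) (adL (L p.1 p.2) ψ)
      = -(opV (spinGen σ p.1 p.2) (adL (L p.1 p.2) ψ)
          + adL (L p.1 p.2) (opV (spinGen σ p.1 p.2) ψ)) := by
    intro p hp
    have hne : p.1 ≠ p.2 := by
      simp only [pairs3, Finset.mem_filter] at hp
      exact ne_of_lt hp.2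
    have h0 := hσ p.1 p.2
    rw [if_neg hne] at h0
    have hanti : σ p.2 * σ p.1 = -(σ p.1 * σ p.2) :=
      eq_neg_of_add_eq_zero_right h0
    have hspin : spinGen σ p.1 p.2 = (-(1/2) : ℂ) • (σ p.1 * σ p.2) := by
      rw [spinGen, hanti]
      module
    rw [hspin, hsmul, ← comm, hsmul]
    module
  rw [Finset.sum_congr rfl key]
  simp only [Finset.sum_add_distrib, Finset.sum_neg_distrib]
  abel
end
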